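/- Let n ≥ 1 and let c ∈ ℝ^n with c_i ∉ ℤ for some index i. Then the hyperplane h = {x ∈ ℝ^n : ∑_{i=1}^n c_i x_i = 1} has weight w(h) ≤ 1 − 1/n. -/

import Mathlib

open scoped Classical

namespace CH

def goodL (v : List ℝ) : Prop := ∀ k, 0 < k → k < v.length → (v.take k).sum ≠ 1

noncomputable def F {n : ℕ} (c : Fin n → ℝ) : Finset (Finset (Fin n)) :=
  Finset.univ.filter (fun S => S.Nonempty ∧ ∑ i ∈ S, c i = 1)

noncomputable def e {n : ℕ} (j : Fin n) (S : Finset (Fin n)) : Fin n :=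
  if j ∈ S then j else if h : S.Nonempty then S.min' h else j

noncomputable def dom {n : ℕ} (j : Fin n) (S : Finset (Fin n)) :
    Finset (List (Fin n) × List (Fin n)) :=
  (((S.erase (e j S)).sort (· ≤ ·)).permutations.toFinset.image (fun l => e j S :: l)) ×ˢ
    ((Sᶜ.sort (· ≤ ·)).permutations.toFinset)

noncomputable def pick {n : ℕ} (c : Fin n → ℝ) (j : Fin n) (π : List (Fin n)) : ℕ :=
  if h : ∃ r, r < π.length ∧ goodL ((π.rotate r).map c) ∧ (π.rotate r).head? ≠ some j
  then h.choose else 0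

noncomputable def Phi {n : ℕ} (c : Fin n → ℝ) (j : Fin n) :
    (Σ _ : Finset (Fin n), List (Fin n) × List (Fin n)) → List (Fin n) :=
  fun x => (x.2.1.rotate (pick c j x.2.1)) ++ x.2.2

noncomputable def T (n : ℕ) (j : Fin n) : Finset (List (Fin n)) :=
  ((List.finRange n).permutations.toFinset).filter (fun l => ¬ (l.head? = some j))

lemma e_mem {n : ℕ} (j : Fin n) {S : Finset (Fin n)} (hS : S.Nonempty) : e j S ∈ S := by
  rw [e]
  split
  · assumption
  · exact S.min'_mem hS

lemma dom_spec {n : ℕ} (j : Fin n) {S : Finset (Fin n)} (hS : S.Nonempty)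
    {π τ : List (Fin n)} (hmem : (π, τ) ∈ dom j S) :
    π.Nodup ∧ π.toFinset = S ∧ π.length = S.card ∧ π.head? = some (e j S) ∧
      τ.Nodup ∧ τ.toFinset = Sᶜ ∧ τ.length = n - S.card := by
  obtain ⟨h1, h2⟩ := Finset.mem_product.mp hmem
  simp only at h1 h2
  obtain ⟨l, hl, hcons⟩ := Finset.mem_image.mp h1
  rw [List.mem_toFinset, List.mem_permutations] at hl
  have hlnd : l.Nodup := hl.nodup_iff.mpr (Finset.sort_nodup _ _)
  have hltf : l.toFinset = S.erase (e j S) := by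
    rw [List.toFinset_eq_of_perm _ _ hl, Finset.sort_toFinset]
  have hemem : e j S ∈ S := e_mem j hS
  have henl : e j S ∉ l := by
    rw [← List.mem_toFinset, hltf]; exact Finset.notMem_erase _ _
  rw [List.mem_toFinset, List.mem_permutations] at h2
  have hτnd : τ.Nodup := h2.nodup_iff.mpr (Finset.sort_nodup _ _)
  have hτtf : τ.toFinset = Sᶜ := by
    rw [List.toFinset_eq_of_perm _ _ h2, Finset.sort_toFinset]
  subst hcons
  refine ⟨List.nodup_cons.mpr ⟨henl, hlnd⟩, ?_, ?_, rfl, hτnd, hτtf, ?_⟩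
  · rw [List.toFinset_cons, hltf, Finset.insert_erase hemem]
  · rw [List.length_cons, hl.length_eq, Finset.length_sort,
      Finset.card_erase_of_mem hemem]
    have := hS.card_pos
    omega
  · rw [h2.length_eq, Finset.length_sort, Finset.card_compl, Fintype.card_fin]

lemma card_dom {n : ℕ} (j : Fin n) {S : Finset (Fin n)} (hS : S.Nonempty) :
    (dom j S).card = (S.card - 1).factorial * (n - S.card).factorial := by
  rw [dom, Finset.card_product, Finset.card_image_of_injective _ List.cons_injective,
    List.toFinset_card_of_nodup (List.nodup_permutations _ (Finset.sort_nodup _ _)),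
    List.toFinset_card_of_nodup (List.nodup_permutations _ (Finset.sort_nodup _ _)),
    List.length_permutations, List.length_permutations, Finset.length_sort, Finset.length_sort,
    Finset.card_erase_of_mem (e_mem j hS), Finset.card_compl, Fintype.card_fin]



lemma sum_take_rotate_le (v : List ℝ) {r k : ℕ} (hr : r ≤ v.length) (hk : k ≤ v.length - r) :
    ((v.rotate r).take k).sum = (v.take (r + k)).sum - (v.take r).sum := by
  rw [List.rotate_eq_drop_append_take hr,
      List.take_append_of_le_length (by simpa using hk),
      List.take_add, List.sum_append]
  ring

lemma sum_take_rotate_ge (v : List ℝ) {r k : ℕ} (hr : r ≤ v.length) (hk : v.length - r ≤ k)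
    (hk2 : k ≤ v.length) :
    ((v.rotate r).take k).sum
      = v.sum - (v.take r).sum + (v.take (k - (v.length - r))).sum := by
  have hsplit : (v.take r).sum + (v.drop r).sum = v.sum := by
    rw [← List.sum_append, List.take_append_drop]
  rw [List.rotate_eq_drop_append_take hr, List.take_append,
      List.take_of_length_le (by simpa using hk), List.take_take,
      List.length_drop, min_eq_left (by omega), List.sum_append]
  linarith

lemma exists_good_rotate (v : List ℝ) (hv : v.sum = 1) (C : Finset ℕ) (hne : C.Nonempty)
    (hlt : ∀ m ∈ C, m < v.length)
    (hplus : ∀ r ∈ C, ∀ m, 0 < m → m < v.length →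
      (v.take m).sum = (v.take r).sum + 1 → m ∈ C)
    (heq : ∀ r ∈ C, ∀ i, 0 < i → i < v.length →
      (v.take i).sum = (v.take r).sum → i ∈ C)
    (hzero : 0 ∈ C ∨ ∀ m ∈ C, (v.take m).sum ≠ 0) :
    ∃ r ∈ C, goodL (v.rotate r) := by
  set s : ℕ → ℝ := fun k => (v.take k).sum with hs
  obtain ⟨r0, hr0C, hr0max⟩ := C.exists_max_image s hne
  set D := C.filter (fun i => s i = s r0) with hD
  have hDne : D.Nonempty := ⟨r0, Finset.mem_filter.mpr ⟨hr0C, rfl⟩⟩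
  set r := D.min' hDne with hrdef
  have hrD : r ∈ D := D.min'_mem hDne
  have hrC : r ∈ C := (Finset.mem_filter.mp hrD).1
  have hrv : s r = s r0 := (Finset.mem_filter.mp hrD).2
  have hmax : ∀ m ∈ C, s m ≤ s r := fun m hm => hrv ▸ hr0max m hm
  have hfirst : ∀ i ∈ C, s i = s r → r ≤ i := fun i hi hsi =>
    D.min'_le i (Finset.mem_filter.mpr ⟨hi, by rw [hsi, hrv]⟩)
  refine ⟨r, hrC, ?_⟩
  intro k hk0 hklen
  rw [List.length_rotate] at hklen
  have hrlen : r < v.length := hlt r hrC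
  by_cases hcase : k ≤ v.length - r
  · rw [sum_take_rotate_le v hrlen.le hcase]
    intro hbad
    have hsum : s (r + k) = s r + 1 := by
      simp only [hs]; linarith [hbad]
    by_cases hm : r + k < v.length
    · have h1 := hplus r hrC (r + k) (by omega) hm hsum
      have h2 := hmax _ h1
      linarith
    · have hrk : r + k = v.length := by omega
      have hst : s (r + k) = 1 := by
        simp only [hs, hrk, List.take_length]; exact hv
      have hsr0 : s r = 0 := by linarith
      rcases hzero with h0 | hnz
      · have h00 : s 0 = s r := by simp only [hs, List.take_zero, List.sum_nil]; linarith
        have := hfirst 0 h0 h00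
        omega
      · exact hnz r hrC hsr0
  · push_neg at hcase
    rw [sum_take_rotate_ge v hrlen.le hcase.le hklen.le]
    intro hbad
    set i := k - (v.length - r) with hidef
    have hi0 : 0 < i := by omega
    have hir : i < r := by omega
    have hsi : s i = s r := by simp only [hs] at hbad ⊢; linarith [hv, hbad]
    have hiC := heq r hrC i hi0 (by omega) hsi
    have := hfirst i hiC hsi
    omega

lemma exists_good_rotate_of_pos (v : List ℝ) (hv : v.sum = 1) (h0 : 0 < v.length) :
    ∃ r, r < v.length ∧ goodL (v.rotate r) := by
  obtain ⟨r, hrC, hg⟩ := exists_good_rotate v hv (Finset.range v.length)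
    ⟨0, by simpa using h0⟩ (by simp)
    (fun r _ m hm0 hm _ => Finset.mem_range.mpr hm)
    (fun r _ i hi0 hi _ => Finset.mem_range.mpr hi)
    (Or.inl (by simpa using h0))
  exact ⟨r, Finset.mem_range.mp hrC, hg⟩

lemma exists_good_rotate_of_irrational (v : List ℝ) (hv : v.sum = 1)
    (hx : ¬ ∃ m : ℤ, (m : ℝ) = (v.take 1).sum) :
    ∃ r, 0 < r ∧ r < v.length ∧ goodL (v.rotate r) := by
  have h1 : 1 < v.length := by
    by_contra hle
    push_neg at hle
    interval_cases h : v.length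
    · exact hx ⟨0, by simp [List.take_of_length_le, List.eq_nil_of_length_eq_zero h, hv]⟩
    · exact hx ⟨1, by rw [List.take_of_length_le (by omega), hv]; norm_num⟩
  set C := (Finset.range v.length).filter
    (fun m => 0 < m ∧ ∃ z : ℤ, (v.take m).sum = (v.take 1).sum + z) with hC
  have h1C : 1 ∈ C := by
    rw [hC, Finset.mem_filter, Finset.mem_range]
    exact ⟨by omega, by norm_num, ⟨0, by simp⟩⟩
  obtain ⟨r, hrC, hg⟩ := exists_good_rotate v hv C ⟨1, h1C⟩
    (fun m hm => Finset.mem_range.mp (Finset.mem_filter.mp hm).1)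
    (by
      rintro r hr m hm0 hm hsum
      obtain ⟨-, -, z, hz⟩ := Finset.mem_filter.mp hr
      rw [hC, Finset.mem_filter, Finset.mem_range]
      exact ⟨hm, hm0, ⟨z + 1, by rw [hsum, hz]; push_cast; ring⟩⟩)
    (by
      rintro r hr i hi0 hi hsum
      obtain ⟨-, -, z, hz⟩ := Finset.mem_filter.mp hr
      rw [hC, Finset.mem_filter, Finset.mem_range]
      exact ⟨hi, hi0, ⟨z, by rw [hsum, hz]⟩⟩)
    (by
      right
      rintro m hm hsum
      obtain ⟨-, -, z, hz⟩ := Finset.mem_filter.mp hm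
      exact hx ⟨-z, by push_cast; linarith [hz, hsum]⟩)
  obtain ⟨-, hr0, -⟩ := Finset.mem_filter.mp hrC
  exact ⟨r, hr0, Finset.mem_range.mp (Finset.mem_filter.mp hrC).1, hg⟩



lemma pick_spec {n : ℕ} (c : Fin n → ℝ) (j : Fin n) (hj : ¬ ∃ m : ℤ, (m : ℝ) = c j)
    {S : Finset (Fin n)} (hSF : S ∈ F c)
    {π τ : List (Fin n)} (hmem : (π, τ) ∈ dom j S) :
    pick c j π < π.length ∧ goodL ((π.rotate (pick c j π)).map c) ∧
      (π.rotate (pick c j π)).head? ≠ some j := by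
  obtain ⟨hSne, hSsum⟩ := (Finset.mem_filter.mp hSF).2
  obtain ⟨hnd, htf, hlen, hhead, -⟩ := dom_spec j hSne hmem
  have hlpos : 0 < π.length := by rw [hlen]; exact hSne.card_pos
  have hvsum : (π.map c).sum = 1 := by
    rw [← List.sum_toFinset c hnd, htf]; exact hSsum
  have hex : ∃ r, r < π.length ∧ goodL ((π.rotate r).map c) ∧ (π.rotate r).head? ≠ some j := by
    by_cases hjS : j ∈ S
    · have hej : e j S = j := by rw [e, if_pos hjS]
      have htake : ((π.map c).take 1).sum = c j := by
        cases π with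
        | nil => simp at hlpos
        | cons a l =>
          have ha : a = e j S := by simpa using hhead
          simp [ha, hej]
      obtain ⟨r, hr0, hrlen, hg⟩ := exists_good_rotate_of_irrational (π.map c) hvsum
        (by rw [htake]; exact hj)
      rw [List.length_map] at hrlen
      refine ⟨r, hrlen, by rw [List.map_rotate]; exact hg, ?_⟩
      rw [List.head?_rotate hrlen, List.getElem?_eq_getElem hrlen]
      intro hbad
      have hπ0 : π[0] = j := by
        cases π with
        | nil => simp at hlpos
        | cons a l =>
          have ha : a = e j S := by simpa using hhead
          simp [ha, hej]
      have : π[r] = π[0] := by rw [hπ0]; simpa using hbad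
      rw [hnd.getElem_inj_iff] at this
      omega
    · have hej : e j S ∈ S := e_mem j hSne
      obtain ⟨r, hrlen, hg⟩ := exists_good_rotate_of_pos (π.map c) hvsum
        (by rw [List.length_map]; exact hlpos)
      rw [List.length_map] at hrlen
      refine ⟨r, hrlen, by rw [List.map_rotate]; exact hg, ?_⟩
      rw [List.head?_rotate hrlen, List.getElem?_eq_getElem hrlen]
      intro hbad
      have hmemS : π[r] ∈ S := by
        rw [← htf]; exact List.mem_toFinset.mpr (List.getElem_mem _)
      rw [show π[r] = j by simpa using hbad] at hmemS
      exact hjS hmemS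
  rw [pick, dif_pos hex]
  exact hex.choose_spec

lemma phi_hit {n : ℕ} (c : Fin n → ℝ) (j : Fin n) (hj : ¬ ∃ m : ℤ, (m : ℝ) = c j)
    {S : Finset (Fin n)} (hSF : S ∈ F c)
    {π τ : List (Fin n)} (hmem : (π, τ) ∈ dom j S) :
    (∀ k, 0 < k → k < S.card →
        (((Phi c j ⟨S, (π, τ)⟩).take k).map c).sum ≠ 1) ∧
      (((Phi c j ⟨S, (π, τ)⟩).take S.card).map c).sum = 1 := by
  obtain ⟨hSne, hSsum⟩ := (Finset.mem_filter.mp hSF).2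
  obtain ⟨hnd, htf, hlen, hhead, -⟩ := dom_spec j hSne hmem
  obtain ⟨hplt, hpg, hph⟩ := pick_spec c j hj hSF hmem
  have hvsum : (π.map c).sum = 1 := by
    rw [← List.sum_toFinset c hnd, htf]; exact hSsum
  set ρ := π.rotate (pick c j π) with hρ
  have hρlen : ρ.length = S.card := by rw [hρ, List.length_rotate]; exact hlen
  have hPhi : Phi c j ⟨S, (π, τ)⟩ = ρ ++ τ := rfl
  constructor
  · intro k hk0 hkt
    rw [hPhi, List.take_append_of_le_length (by omega)]
    rw [List.map_take]
    have := hpg k hk0 (by rw [List.length_map, hρlen]; omega)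
    simpa using this
  · rw [hPhi, List.take_append_of_le_length (le_of_eq hρlen.symm),
      ← hρlen, List.take_length]
    rw [hρ, List.map_rotate]
    rw [((π.map c).rotate_perm _).sum_eq]
    exact hvsum


lemma phi_mapsTo {n : ℕ} (c : Fin n → ℝ) (j : Fin n) (hj : ¬ ∃ m : ℤ, (m : ℝ) = c j) :
    ∀ a ∈ (F c).sigma (fun S => dom j S), Phi c j a ∈ T n j := by
  rintro ⟨S, π, τ⟩ ha
  rw [Finset.mem_sigma] at ha
  obtain ⟨hSF, hmem⟩ := ha
  have hSne : S.Nonempty := ((Finset.mem_filter.mp hSF).2).1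
  obtain ⟨hπnd, hπtf, hπlen, hπhead, hτnd, hτtf, hτlen⟩ := dom_spec j hSne hmem
  obtain ⟨hplt, hpg, hph⟩ := pick_spec c j hj hSF hmem
  set ρ := π.rotate (pick c j π) with hρ
  have hρnd : ρ.Nodup := List.nodup_rotate.mpr hπnd
  have hρtf : ρ.toFinset = S := by
    rw [hρ, List.toFinset_eq_of_perm _ _ (π.rotate_perm _), hπtf]
  have hρlen : ρ.length = S.card := by rw [hρ, List.length_rotate]; exact hπlen
  have hρne : ρ ≠ [] := by
    intro hc
    rw [hc] at hρlen
    have := hSne.card_pos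
    simp at hρlen
    omega
  have hdisj : ρ.Disjoint τ := by
    intro x hxρ hxτ
    have h1 : x ∈ S := by rw [← hρtf]; exact List.mem_toFinset.mpr hxρ
    have h2 : x ∈ Sᶜ := by rw [← hτtf]; exact List.mem_toFinset.mpr hxτ
    rw [Finset.mem_compl] at h2
    exact h2 h1
  have hnd : (ρ ++ τ).Nodup := hρnd.append hτnd hdisj
  have htf : (ρ ++ τ).toFinset = Finset.univ := by
    rw [List.toFinset_append, hρtf, hτtf, Finset.union_compl]
  have hPhi : Phi c j ⟨S, (π, τ)⟩ = ρ ++ τ := rfl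
  rw [hPhi, T, Finset.mem_filter, List.mem_toFinset, List.mem_permutations]
  constructor
  · exact List.perm_of_nodup_nodup_toFinset_eq hnd (List.nodup_finRange n)
      (by rw [htf, List.toFinset_finRange])
  · rw [List.head?_append_of_ne_nil _ hρne]
    exact hph

lemma phi_injOn {n : ℕ} (c : Fin n → ℝ) (j : Fin n) (hj : ¬ ∃ m : ℤ, (m : ℝ) = c j) :
    Set.InjOn (Phi c j) ((F c).sigma (fun S => dom j S)) := by
  rintro ⟨S, π, τ⟩ ha ⟨S', π', τ'⟩ hb heq
  rw [Finset.mem_coe, Finset.mem_sigma] at ha hb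
  obtain ⟨hSF, hmem⟩ := ha
  obtain ⟨hSF', hmem'⟩ := hb
  have hSne : S.Nonempty := ((Finset.mem_filter.mp hSF).2).1
  have hSne' : S'.Nonempty := ((Finset.mem_filter.mp hSF').2).1
  obtain ⟨hπnd, hπtf, hπlen, hπhead, hτnd, hτtf, hτlen⟩ := dom_spec j hSne hmem
  obtain ⟨hπnd', hπtf', hπlen', hπhead', hτnd', hτtf', hτlen'⟩ := dom_spec j hSne' hmem'
  obtain ⟨ha1, ha2⟩ := phi_hit c j hj hSF hmem
  obtain ⟨hb1, hb2⟩ := phi_hit c j hj hSF' hmem'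
  -- cards are equal
  have hcard : S.card = S'.card := by
    rcases Nat.lt_trichotomy S.card S'.card with hlt | heqc | hgt
    · exfalso
      apply hb1 S.card hSne.card_pos hlt
      rw [← heq]; exact ha2
    · exact heqc
    · exfalso
      apply ha1 S'.card hSne'.card_pos hgt
      rw [heq]; exact hb2
  set ρ := π.rotate (pick c j π) with hρdef
  set ρ' := π'.rotate (pick c j π') with hρdef'
  have hρlen : ρ.length = S.card := by rw [hρdef, List.length_rotate]; exact hπlen
  have hρlen' : ρ'.length = S'.card := by rw [hρdef', List.length_rotate]; exact hπlen'
  have hPhi : (ρ ++ τ : List (Fin n)) = ρ' ++ τ' := heq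
  have hρρ : ρ = ρ' := by
    have e1 : (ρ ++ τ).take S.card = ρ := List.take_left' hρlen
    have e2 : (ρ' ++ τ').take S.card = ρ' := List.take_left' (by rw [hρlen', hcard])
    rw [← e1, ← e2, hPhi]
  have hττ : τ = τ' := by
    have e1 : (ρ ++ τ).drop S.card = τ := List.drop_left' hρlen
    have e2 : (ρ' ++ τ').drop S.card = τ' := List.drop_left' (by rw [hρlen', hcard])
    rw [← e1, ← e2, hPhi]
  have hSS : S = S' := by
    rw [← hπtf, ← hπtf']
    rw [← List.toFinset_eq_of_perm _ _ (π.rotate_perm (pick c j π)),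
        ← List.toFinset_eq_of_perm _ _ (π'.rotate_perm (pick c j π'))]
    rw [← hρdef, ← hρdef', hρρ]
  have hππ : π = π' := by
    obtain ⟨hplt, -, -⟩ := pick_spec c j hj hSF hmem
    obtain ⟨hplt', -, -⟩ := pick_spec c j hj hSF' hmem'
    have hlen12 : π.length = π'.length := by rw [hπlen, hπlen', hcard]
    have hlpos : 0 < π.length := by rw [hπlen]; exact hSne.card_pos
    set r1 := pick c j π
    set r2 := pick c j π'
    have hπ' : π' = π.rotate (r1 + (π.length - r2)) := by
      rw [← List.rotate_rotate, ← hρdef, hρρ, hρdef', List.rotate_rotate]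
      have h2 : r2 + (π.length - r2) = π'.length := by omega
      rw [h2, List.rotate_length]
    set m := r1 + (π.length - r2) with hm
    have hmod : π.rotate m = π.rotate (m % π.length) := (π.rotate_mod m).symm
    have hmlt : m % π.length < π.length := Nat.mod_lt _ hlpos
    have hheads : π'.head? = π.head? := by
      rw [hπhead, hπhead', hSS]
    have hget : π[m % π.length] = π[0] := by
      have h1 : π'.head? = some π[m % π.length] := by
        rw [hπ', hmod, List.head?_rotate hmlt, List.getElem?_eq_getElem hmlt]
      have h2 : π.head? = some π[0] := by
        rw [List.head?_eq_getElem?, List.getElem?_eq_getElem hlpos]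
      rw [hheads, h2] at h1
      exact (Option.some_injective _ h1).symm
    rw [hπnd.getElem_inj_iff] at hget
    rw [hπ', hmod, hget]
    simp
  subst hSS hππ hττ
  rfl

lemma card_T {n : ℕ} (hn : 1 ≤ n) (j : Fin n) :
    (T n j).card = n.factorial - (n - 1).factorial := by
  have hPnd : (List.finRange n).permutations.Nodup :=
    List.nodup_permutations _ (List.nodup_finRange n)
  have hPcard : (List.finRange n).permutations.toFinset.card = n.factorial := by
    rw [List.toFinset_card_of_nodup hPnd, List.length_permutations, List.length_finRange]
  have himg : (List.finRange n).permutations.toFinset.filter (fun l => l.head? = some j)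
      = ((List.finRange n).erase j).permutations.toFinset.image (fun l => j :: l) := by
    ext l
    simp only [Finset.mem_filter, List.mem_toFinset, List.mem_permutations, Finset.mem_image]
    constructor
    · rintro ⟨hlp, hhead⟩
      cases l with
      | nil => simp at hhead
      | cons a tl =>
        have ha : a = j := by simpa using hhead
        subst ha
        obtain ⟨-, htl⟩ := List.cons_perm_iff_perm_erase.mp hlp
        exact ⟨tl, htl, rfl⟩
    · rintro ⟨tl, htl, rfl⟩
      exact ⟨List.cons_perm_iff_perm_erase.mpr ⟨List.mem_finRange j, htl⟩, rfl⟩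
  have hcardimg : ((List.finRange n).permutations.toFinset.filter
      (fun l => l.head? = some j)).card = (n - 1).factorial := by
    rw [himg, Finset.card_image_of_injective _ List.cons_injective,
      List.toFinset_card_of_nodup
        (List.nodup_permutations _ ((List.nodup_finRange n).erase j)),
      List.length_permutations, List.length_erase_of_mem (List.mem_finRange j),
      List.length_finRange]
  have hsplit := Finset.card_filter_add_card_filter_not
    (s := (List.finRange n).permutations.toFinset) (fun l => l.head? = some j)
  rw [T]
  omega

lemma main_count {n : ℕ} (c : Fin n → ℝ) (j : Fin n) (hj : ¬ ∃ m : ℤ, (m : ℝ) = c j) :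
    ∑ S ∈ F c, (S.card - 1).factorial * (n - S.card).factorial
      ≤ n.factorial - (n - 1).factorial := by
  calc ∑ S ∈ F c, (S.card - 1).factorial * (n - S.card).factorial
      = ∑ S ∈ F c, (dom j S).card := by
        refine Finset.sum_congr rfl fun S hS => ?_
        exact (card_dom j ((Finset.mem_filter.mp hS).2.1)).symm
    _ = ((F c).sigma (fun S => dom j S)).card := (Finset.card_sigma _ _).symm
    _ ≤ (T n j).card :=
        Finset.card_le_card_of_injOn _ (phi_mapsTo c j hj) (phi_injOn c j hj)
    _ = n.factorial - (n - 1).factorial := card_T (Nat.one_le_iff_ne_zero.mpr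
        (fun h0 => (by rw [h0] at j; exact j.elim0 : False))) j

end CH




open scoped Classical in
/-- The Clifton–Huang weight of the hyperplane `{x : ∑ i, c i * x i = 1}`:
the sum over nonempty subsets `S ⊆ [n]` with `∑_{i ∈ S} c i = 1` of
`1 / (|S| * binom(n, |S|))`. -/
noncomputable def hyperplaneWeight {n : ℕ} (c : Fin n → ℝ) : ℝ :=
  ∑ S : Finset (Fin n),
    if S.Nonempty ∧ ∑ i ∈ S, c i = 1 then
      1 / (S.card * (n.choose S.card)) else 0

theorem weight_le_of_fractional_coefficient (n : ℕ) (hn : 1 ≤ n) (c : Fin n → ℝ)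
    (h : ∃ i, ¬ ∃ m : ℤ, (m : ℝ) = c i) :
    hyperplaneWeight c ≤ 1 - 1 / n := by
  obtain ⟨j, hj⟩ := h
  have hnfpos : (0 : ℝ) < (n.factorial : ℝ) := by
    exact_mod_cast n.factorial_pos
  have hnpos : (0 : ℝ) < (n : ℝ) := by exact_mod_cast hn
  have hw : hyperplaneWeight c
      = (∑ S ∈ CH.F c,
          (((S.card - 1).factorial : ℝ) * ((n - S.card).factorial : ℝ))) / n.factorial := by
    rw [hyperplaneWeight, Finset.sum_div, CH.F, ← Finset.sum_filter]
    refine Finset.sum_congr rfl fun S hS => ?_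
    obtain ⟨hSne, -⟩ := (Finset.mem_filter.mp hS).2
    have ht1 : 1 ≤ S.card := hSne.card_pos
    have htn : S.card ≤ n := by
      have := Finset.card_le_univ S
      simpa using this
    have key : S.card * (n.choose S.card)
        * ((S.card - 1).factorial * (n - S.card).factorial) = n.factorial := by
      calc S.card * (n.choose S.card) * ((S.card - 1).factorial * (n - S.card).factorial)
          = n.choose S.card * (S.card * (S.card - 1).factorial) * (n - S.card).factorial := by
            ring
        _ = n.choose S.card * S.card.factorial * (n - S.card).factorial := by
            rw [Nat.mul_factorial_pred (Nat.one_le_iff_ne_zero.mp ht1)]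
        _ = n.factorial := Nat.choose_mul_factorial_mul_factorial htn
    have hXne : ((S.card : ℝ) * ((n.choose S.card : ℕ) : ℝ)) ≠ 0 := by
      have h1 : 0 < S.card := ht1
      have h2 : 0 < n.choose S.card := Nat.choose_pos htn
      positivity
    rw [div_eq_div_iff hXne (ne_of_gt hnfpos)]
    have keyR := congrArg (fun x : ℕ => (x : ℝ)) key
    push_cast at keyR ⊢
    linarith
  have hsumle : (∑ S ∈ CH.F c,
      (((S.card - 1).factorial : ℝ) * ((n - S.card).factorial : ℝ)))
        ≤ (n.factorial : ℝ) - ((n - 1).factorial : ℝ) := by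
    have h1 := CH.main_count c j hj
    have h2 : (n - 1).factorial ≤ n.factorial := Nat.factorial_le (by omega)
    calc (∑ S ∈ CH.F c, (((S.card - 1).factorial : ℝ) * ((n - S.card).factorial : ℝ)))
        = ((∑ S ∈ CH.F c, (S.card - 1).factorial * (n - S.card).factorial : ℕ) : ℝ) := by
          push_cast; rfl
      _ ≤ ((n.factorial - (n - 1).factorial : ℕ) : ℝ) := by exact_mod_cast h1
      _ = (n.factorial : ℝ) - ((n - 1).factorial : ℝ) := by
          rw [Nat.cast_sub h2]
  have hmul : (n : ℝ) * ((n - 1).factorial : ℝ) = (n.factorial : ℝ) := by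
    exact_mod_cast Nat.mul_factorial_pred (Nat.one_le_iff_ne_zero.mp hn)
  calc hyperplaneWeight c
      = (∑ S ∈ CH.F c,
          (((S.card - 1).factorial : ℝ) * ((n - S.card).factorial : ℝ))) / n.factorial := hw
    _ ≤ ((n.factorial : ℝ) - ((n - 1).factorial : ℝ)) / n.factorial := by
        exact div_le_div_of_nonneg_right hsumle hnfpos.le
    _ = 1 - 1 / n := by
        field_simp
        nlinarith [hmul]
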